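/- (Minimal sufficiency of the modality-exclusive representation.) Let V, T, V_X be random variables with V_X conditionally independent of T given V. If I(V; V_X | T) = H(V | T) and I(T; V_X) = 0, then I(V; V_X) = H(V | T). Symmetrically, if T_X is conditionally independent of V given T, I(T; T_X | V) = H(T | V), and I(V; T_X) = 0, then I(T; T_X) = H(T | V). -/

import Mathlib

open MeasureTheory ProbabilityTheory

namespace DisNCL

variable {Ω : Type*} [MeasurableSpace Ω]

/-- The probability that a random variable `X` takes the value `x`. -/
noncomputable def pr {S : Type*} (μ : Measure Ω) (X : Ω → S) (x : S) : ℝ :=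
  (μ {ω | X ω = x}).toReal

/-- Shannon entropy `H(X)` of a finitely-valued random variable. -/
noncomputable def H {S : Type*} [Fintype S] (μ : Measure Ω) (X : Ω → S) : ℝ :=
  -∑ x, pr μ X x * Real.log (pr μ X x)

/-- Conditional entropy `H(X | Y) = ∑ y P(Y = y) H(X | Y = y)`, where the inner entropy
is taken under the conditional measure given `Y = y`. -/
noncomputable def condH {S T : Type*} [Fintype S] [Fintype T]
    (μ : Measure Ω) (X : Ω → S) (Y : Ω → T) : ℝ :=
  ∑ y, pr μ Y y * H (ProbabilityTheory.cond μ {ω | Y ω = y}) X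

/-- Mutual information `I(X;Y) = H(X) + H(Y) - H(X,Y)`. -/
noncomputable def MI {S T : Type*} [Fintype S] [Fintype T]
    (μ : Measure Ω) (X : Ω → S) (Y : Ω → T) : ℝ :=
  H μ X + H μ Y - H μ (fun ω => (X ω, Y ω))

/-- Conditional mutual information `I(X;Y|Z) = ∑ z P(Z = z) I(X;Y | Z = z)`, where the
inner mutual information is taken under the conditional measure given `Z = z`. -/
noncomputable def CMI {S T U : Type*} [Fintype S] [Fintype T] [Fintype U]
    (μ : Measure Ω) (X : Ω → S) (Y : Ω → T) (Z : Ω → U) : ℝ :=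
  ∑ z, pr μ Z z * MI (ProbabilityTheory.cond μ {ω | Z ω = z}) X Y

/-- `X` and `Y` are conditionally independent given `Z`
(written `X ⊥ Y | Z`): for all values,
`P(X = x, Y = y, Z = z) ⬝ P(Z = z) = P(X = x, Z = z) ⬝ P(Y = y, Z = z)`. -/
def CondIndep {S T U : Type*} (μ : Measure Ω) (X : Ω → S) (Y : Ω → T) (Z : Ω → U) : Prop :=
  ∀ (x : S) (y : T) (z : U),
    pr μ (fun ω => (X ω, Y ω, Z ω)) (x, y, z) * pr μ Z z =
      pr μ (fun ω => (X ω, Z ω)) (x, z) * pr μ (fun ω => (Y ω, Z ω)) (y, z)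

lemma pr_nonneg {S : Type*} (μ : Measure Ω) (X : Ω → S) (x : S) : 0 ≤ pr μ X x :=
  ENNReal.toReal_nonneg

lemma pr_congr {S T : Type*} (μ : Measure Ω) {X : Ω → S} {Y : Ω → T} {x : S} {y : T}
    (h : ∀ ω, X ω = x ↔ Y ω = y) : pr μ X x = pr μ Y y := by
  unfold pr
  congr 1
  exact congrArg μ (Set.ext fun ω => h ω)

/-- Marginalization over the second component. -/
lemma pr_marg {S T : Type*} [Fintype T]
    [MeasurableSpace S] [MeasurableSingletonClass S]
    [MeasurableSpace T] [MeasurableSingletonClass T]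
    (μ : Measure Ω) [IsFiniteMeasure μ] {X : Ω → S} {Y : Ω → T}
    (hX : Measurable X) (hY : Measurable Y) (x : S) :
    pr μ X x = ∑ y, pr μ (fun ω => (X ω, Y ω)) (x, y) := by
  unfold pr
  rw [← ENNReal.toReal_sum (fun y _ => measure_ne_top μ _)]
  congr 1
  have hset : {ω | X ω = x} = ⋃ y, {ω | (X ω, Y ω) = (x, y)} := by
    ext ω; simp [Prod.ext_iff]
  rw [hset, measure_iUnion ?hd ?hm, tsum_fintype]
  case hd =>
    intro y y' hyy'
    refine Set.disjoint_left.2 ?_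
    rintro ω h1 h2
    rw [Set.mem_setOf_eq, Prod.ext_iff] at h1 h2
    exact hyy' (h1.2.symm.trans h2.2)
  case hm =>
    intro y
    have : {ω | (X ω, Y ω) = (x, y)} = X ⁻¹' {x} ∩ Y ⁻¹' {y} := by
      ext ω; simp [Prod.ext_iff]
    rw [this]
    exact (hX (measurableSet_singleton x)).inter (hY (measurableSet_singleton y))

/-- Entropy is invariant under relabeling values by an equivalence. -/
lemma H_comp_equiv {S S' : Type*} [Fintype S] [Fintype S'] (μ : Measure Ω) (X : Ω → S)
    (e : S ≃ S') : H μ (fun ω => e (X ω)) = H μ X := by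
  unfold H
  congr 1
  refine (Fintype.sum_equiv e _ _ (fun s => ?_)).symm
  have h : pr μ (fun ω => e (X ω)) (e s) = pr μ X s :=
    pr_congr μ (fun ω => by simp)
  rw [h]

lemma H_swap {S T : Type*} [Fintype S] [Fintype T] (μ : Measure Ω) (X : Ω → S) (Y : Ω → T) :
    H μ (fun ω => (X ω, Y ω)) = H μ (fun ω => (Y ω, X ω)) := by
  have h := H_comp_equiv μ (fun ω => (Y ω, X ω)) (Equiv.prodComm T S)
  simpa using h

/-- The probability under the conditional measure times that of the condition. -/
lemma pr_cond_mul {S U : Type*} [MeasurableSpace U] [MeasurableSingletonClass U]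
    (μ : Measure Ω) [IsFiniteMeasure μ] (X : Ω → S) {Z : Ω → U} (hZ : Measurable Z)
    (x : S) (z : U) :
    pr (ProbabilityTheory.cond μ {ω | Z ω = z}) X x * pr μ Z z
      = pr μ (fun ω => (X ω, Z ω)) (x, z) := by
  have hms : MeasurableSet {ω | Z ω = z} := hZ (measurableSet_singleton z)
  unfold pr
  rw [cond_apply hms]
  have hset : {ω | Z ω = z} ∩ {ω | X ω = x} = {ω | (X ω, Z ω) = (x, z)} := by
    ext ω; simp [Prod.ext_iff, and_comm]
  rw [hset]
  by_cases h0 : μ {ω | Z ω = z} = 0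
  · have h1 : μ {ω | (X ω, Z ω) = (x, z)} = 0 := by
      refine measure_mono_null ?_ h0
      intro ω hω
      simp only [Set.mem_setOf_eq, Prod.ext_iff] at hω ⊢
      exact hω.2
    rw [h0, h1]
    simp
  · rw [ENNReal.toReal_mul, ENNReal.toReal_inv]
    have hne : (μ {ω | Z ω = z}).toReal ≠ 0 :=
      ENNReal.toReal_ne_zero.2 ⟨h0, measure_ne_top μ _⟩
    field_simp

/-- Chain rule for entropy: `H(X|Z) = H(X,Z) - H(Z)`. -/
lemma condH_eq {S U : Type*} [Fintype S] [Fintype U]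
    [MeasurableSpace S] [MeasurableSingletonClass S]
    [MeasurableSpace U] [MeasurableSingletonClass U]
    (μ : Measure Ω) [IsFiniteMeasure μ] {X : Ω → S} {Z : Ω → U}
    (hX : Measurable X) (hZ : Measurable Z) :
    condH μ X Z = H μ (fun ω => (X ω, Z ω)) - H μ Z := by
  have hz : ∀ z, pr μ Z z = ∑ x, pr μ (fun ω => (X ω, Z ω)) (x, z) := by
    intro z
    rw [pr_marg μ hZ hX z]
    exact Finset.sum_congr rfl fun x _ =>
      pr_congr μ (fun ω => by simp [Prod.ext_iff, and_comm])
  have pt : ∀ z x,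
      pr μ Z z * (pr (ProbabilityTheory.cond μ {ω | Z ω = z}) X x *
          Real.log (pr (ProbabilityTheory.cond μ {ω | Z ω = z}) X x))
        = pr μ (fun ω => (X ω, Z ω)) (x, z) * Real.log (pr μ (fun ω => (X ω, Z ω)) (x, z))
          - pr μ (fun ω => (X ω, Z ω)) (x, z) * Real.log (pr μ Z z) := by
    intro z x
    have hq := pr_cond_mul μ X hZ x z
    set q := pr (ProbabilityTheory.cond μ {ω | Z ω = z}) X x with hqd
    set pz := pr μ Z z with hpzd
    set pxz := pr μ (fun ω => (X ω, Z ω)) (x, z) with hpxzd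
    by_cases hpxz : pxz = 0
    · rcases mul_eq_zero.1 (hq.trans hpxz) with h | h
      · simp [hpxz, h]
      · simp [hpxz, h]
    · have hpz : pz ≠ 0 := fun h => hpxz (by rw [← hq, h, mul_zero])
      have hqv : q = pxz / pz := (eq_div_iff hpz).2 hq
      rw [hqv, Real.log_div hpxz hpz]
      field_simp
  have step : ∀ z, pr μ Z z * H (ProbabilityTheory.cond μ {ω | Z ω = z}) X
      = (-∑ x, pr μ (fun ω => (X ω, Z ω)) (x, z)
            * Real.log (pr μ (fun ω => (X ω, Z ω)) (x, z)))
        + pr μ Z z * Real.log (pr μ Z z) := by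
    intro z
    unfold H
    rw [mul_neg, Finset.mul_sum, Finset.sum_congr rfl (fun x _ => pt z x),
      Finset.sum_sub_distrib]
    rw [← Finset.sum_mul, ← hz z]
    ring
  unfold condH
  rw [Finset.sum_congr rfl (fun z _ => step z), Finset.sum_add_distrib,
    Finset.sum_neg_distrib]
  unfold H
  rw [Fintype.sum_prod_type, Finset.sum_comm]
  ring

/-- `I(X;Y|Z)` in terms of joint entropies. -/
lemma CMI_eq {S T U : Type*} [Fintype S] [Fintype T] [Fintype U]
    [MeasurableSpace S] [MeasurableSingletonClass S]
    [MeasurableSpace T] [MeasurableSingletonClass T]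
    [MeasurableSpace U] [MeasurableSingletonClass U]
    (μ : Measure Ω) [IsFiniteMeasure μ] {X : Ω → S} {Y : Ω → T} {Z : Ω → U}
    (hX : Measurable X) (hY : Measurable Y) (hZ : Measurable Z) :
    CMI μ X Y Z = H μ (fun ω => (X ω, Z ω)) + H μ (fun ω => (Y ω, Z ω)) - H μ Z
      - H μ (fun ω => ((X ω, Y ω), Z ω)) := by
  have h1 : CMI μ X Y Z = condH μ X Z + condH μ Y Z - condH μ (fun ω => (X ω, Y ω)) Z := by
    unfold CMI MI condH
    rw [← Finset.sum_add_distrib, ← Finset.sum_sub_distrib]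
    exact Finset.sum_congr rfl fun z _ => by ring
  rw [h1, condH_eq μ hX hZ, condH_eq μ hY hZ, condH_eq μ (hX.prodMk hY) hZ]
  ring


lemma pr_le_of_imp {S T : Type*} (μ : Measure Ω) [IsFiniteMeasure μ]
    {X : Ω → S} {Y : Ω → T} {x : S} {y : T} (h : ∀ ω, X ω = x → Y ω = y) :
    pr μ X x ≤ pr μ Y y :=
  ENNReal.toReal_mono (measure_ne_top μ _) (measure_mono (fun ω hω => h ω hω))

lemma condIndep_symm {S T U : Type*} {μ : Measure Ω} {X : Ω → S} {Y : Ω → T} {Z : Ω → U}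
    (h : CondIndep μ X Y Z) : CondIndep μ Y X Z := by
  intro y x z
  have h0 := h x y z
  have h1 : pr μ (fun ω => (Y ω, X ω, Z ω)) (y, x, z)
      = pr μ (fun ω => (X ω, Y ω, Z ω)) (x, y, z) :=
    pr_congr μ (fun ω => by simp [Prod.ext_iff]; tauto)
  rw [h1, h0]
  ring

/-- Conditional independence makes the conditional mutual information vanish. -/
lemma CMI_eq_zero {S T U : Type*} [Fintype S] [Fintype T] [Fintype U]
    [MeasurableSpace S] [MeasurableSingletonClass S]
    [MeasurableSpace T] [MeasurableSingletonClass T]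
    [MeasurableSpace U] [MeasurableSingletonClass U]
    (μ : Measure Ω) [IsFiniteMeasure μ] {X : Ω → S} {Y : Ω → T} {Z : Ω → U}
    (hX : Measurable X) (hY : Measurable Y) (hZ : Measurable Z)
    (h : CondIndep μ X Y Z) : CMI μ X Y Z = 0 := by
  rw [CMI_eq μ hX hY hZ]
  set p3 : S → T → U → ℝ := fun x y z => pr μ (fun ω => (X ω, Y ω, Z ω)) (x, y, z) with hp3
  set pxz : S → U → ℝ := fun x z => pr μ (fun ω => (X ω, Z ω)) (x, z) with hpxz
  set pyz : T → U → ℝ := fun y z => pr μ (fun ω => (Y ω, Z ω)) (y, z) with hpyz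
  set pz : U → ℝ := fun z => pr μ Z z with hpz
  -- marginals
  have mxz : ∀ x z, pxz x z = ∑ y, p3 x y z := by
    intro x z
    rw [hpxz]
    simp only
    rw [pr_marg μ (hX.prodMk hZ) hY (x, z)]
    exact Finset.sum_congr rfl fun y _ =>
      pr_congr μ (fun ω => by simp [Prod.ext_iff]; tauto)
  have myz : ∀ y z, pyz y z = ∑ x, p3 x y z := by
    intro y z
    rw [hpyz]
    simp only
    rw [pr_marg μ (hY.prodMk hZ) hX (y, z)]
    exact Finset.sum_congr rfl fun x _ =>
      pr_congr μ (fun ω => by simp [Prod.ext_iff]; tauto)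
  have p3xyz : ∀ x y z, pr μ (fun ω => ((X ω, Y ω), Z ω)) ((x, y), z) = p3 x y z := by
    intro x y z
    exact pr_congr μ (fun ω => by simp [Prod.ext_iff]; tauto)
  -- rewrite the four entropies as triple sums
  have hA : H μ (fun ω => (X ω, Z ω))
      = -∑ x, ∑ y, ∑ z, p3 x y z * Real.log (pxz x z) := by
    unfold H
    rw [Fintype.sum_prod_type]
    congr 1
    calc ∑ x, ∑ z, pr μ (fun ω => (X ω, Z ω)) (x, z)
            * Real.log (pr μ (fun ω => (X ω, Z ω)) (x, z))
        = ∑ x, ∑ z, ∑ y, p3 x y z * Real.log (pxz x z) := by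
          refine Finset.sum_congr rfl fun x _ => Finset.sum_congr rfl fun z _ => ?_
          rw [show pr μ (fun ω => (X ω, Z ω)) (x, z) = pxz x z from rfl, mxz x z,
            Finset.sum_mul]
      _ = ∑ x, ∑ y, ∑ z, p3 x y z * Real.log (pxz x z) :=
          Finset.sum_congr rfl fun x _ => Finset.sum_comm
  have hB : H μ (fun ω => (Y ω, Z ω))
      = -∑ x, ∑ y, ∑ z, p3 x y z * Real.log (pyz y z) := by
    unfold H
    rw [Fintype.sum_prod_type]
    congr 1
    calc ∑ y, ∑ z, pr μ (fun ω => (Y ω, Z ω)) (y, z)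
            * Real.log (pr μ (fun ω => (Y ω, Z ω)) (y, z))
        = ∑ y, ∑ z, ∑ x, p3 x y z * Real.log (pyz y z) := by
          refine Finset.sum_congr rfl fun y _ => Finset.sum_congr rfl fun z _ => ?_
          rw [show pr μ (fun ω => (Y ω, Z ω)) (y, z) = pyz y z from rfl, myz y z,
            Finset.sum_mul]
      _ = ∑ y, ∑ x, ∑ z, p3 x y z * Real.log (pyz y z) :=
          Finset.sum_congr rfl fun y _ => Finset.sum_comm
      _ = ∑ x, ∑ y, ∑ z, p3 x y z * Real.log (pyz y z) := Finset.sum_comm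
  have hzmarg : ∀ z, pz z = ∑ x, ∑ y, p3 x y z := by
    intro z
    rw [hpz]
    simp only
    rw [pr_marg μ hZ (hX.prodMk hY) z, Fintype.sum_prod_type]
    refine Finset.sum_congr rfl fun x _ => Finset.sum_congr rfl fun y _ =>
      pr_congr μ (fun ω => by simp [Prod.ext_iff]; tauto)
  have hC : H μ Z = -∑ x, ∑ y, ∑ z, p3 x y z * Real.log (pz z) := by
    unfold H
    congr 1
    have h1 : ∀ z, pr μ Z z * Real.log (pr μ Z z)
        = ∑ x, ∑ y, p3 x y z * Real.log (pz z) := by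
      intro z
      have he : pr μ Z z = pz z := rfl
      rw [he]
      nth_rewrite 1 [hzmarg z]
      rw [Finset.sum_mul]
      exact Finset.sum_congr rfl fun x _ => Finset.sum_mul _ _ _
    rw [Finset.sum_congr rfl fun z _ => h1 z, Finset.sum_comm]
    exact Finset.sum_congr rfl fun x _ => Finset.sum_comm
  have hD : H μ (fun ω => ((X ω, Y ω), Z ω))
      = -∑ x, ∑ y, ∑ z, p3 x y z * Real.log (p3 x y z) := by
    unfold H
    rw [Fintype.sum_prod_type, Fintype.sum_prod_type]
    congr 1
    exact Finset.sum_congr rfl fun x _ => Finset.sum_congr rfl fun y _ =>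
      Finset.sum_congr rfl fun z _ => by rw [p3xyz]
  -- termwise identity
  have term : ∀ x y z, p3 x y z * Real.log (pxz x z) + p3 x y z * Real.log (pyz y z)
      = p3 x y z * Real.log (pz z) + p3 x y z * Real.log (p3 x y z) := by
    intro x y z
    by_cases h0 : p3 x y z = 0
    · simp [h0]
    · have hle : p3 x y z ≤ pz z :=
        pr_le_of_imp μ (fun ω hω => by simp [Prod.ext_iff] at hω; exact hω.2.2)
      have hpos : 0 < p3 x y z := lt_of_le_of_ne (pr_nonneg μ _ _) (Ne.symm h0)
      have hzne : pz z ≠ 0 := ne_of_gt (lt_of_lt_of_le hpos hle)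
      have hci := h x y z
      have hprod : pxz x z * pyz y z ≠ 0 := by
        rw [← hci]; exact mul_ne_zero h0 hzne
      have hxne : pxz x z ≠ 0 := fun hh => hprod (by rw [hh, zero_mul])
      have hyne : pyz y z ≠ 0 := fun hh => hprod (by rw [hh, mul_zero])
      have hval : p3 x y z = pxz x z * pyz y z / pz z := (eq_div_iff hzne).2 hci
      rw [hval, Real.log_div (mul_ne_zero hxne hyne) hzne, Real.log_mul hxne hyne]
      ring
  have hsum : (∑ x, ∑ y, ∑ z, (p3 x y z * Real.log (pxz x z)
        + p3 x y z * Real.log (pyz y z)))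
      = ∑ x, ∑ y, ∑ z, (p3 x y z * Real.log (pz z) + p3 x y z * Real.log (p3 x y z)) :=
    Finset.sum_congr rfl fun x _ => Finset.sum_congr rfl fun y _ =>
      Finset.sum_congr rfl fun z _ => term x y z
  simp only [Finset.sum_add_distrib] at hsum
  rw [hA, hB, hC, hD]
  linarith

/-- self-inverse reshuffling `((z,w),x) ↦ ((x,w),z)`. -/
def eqv3 (S T U : Type*) : (T × U) × S ≃ (S × U) × T :=
  ⟨fun p => ((p.2, p.1.2), p.1.1), fun p => ((p.2, p.1.2), p.1.1),
    fun _ => rfl, fun _ => rfl⟩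

lemma key_lemma {S T U : Type*} [Fintype S] [Fintype T] [Fintype U]
    [MeasurableSpace S] [MeasurableSingletonClass S]
    [MeasurableSpace T] [MeasurableSingletonClass T]
    [MeasurableSpace U] [MeasurableSingletonClass U]
    (μ : Measure Ω) [IsFiniteMeasure μ]
    {X : Ω → S} {Z : Ω → T} {W : Ω → U}
    (hX : Measurable X) (hZ : Measurable Z) (hW : Measurable W)
    (h1 : CondIndep μ W Z X) (h2 : CMI μ X W Z = condH μ X Z) (h3 : MI μ Z W = 0) :
    MI μ X W = condH μ X Z := by
  have hcmi0 : CMI μ Z W X = 0 := CMI_eq_zero μ hZ hW hX (condIndep_symm h1)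
  have hchain : MI μ X W = MI μ Z W + CMI μ X W Z - CMI μ Z W X := by
    rw [CMI_eq μ hX hW hZ, CMI_eq μ hZ hW hX]
    unfold MI
    have s1 : H μ (fun ω => (Z ω, X ω)) = H μ (fun ω => (X ω, Z ω)) := H_swap μ Z X
    have s2 : H μ (fun ω => (W ω, X ω)) = H μ (fun ω => (X ω, W ω)) := H_swap μ W X
    have s3 : H μ (fun ω => (W ω, Z ω)) = H μ (fun ω => (Z ω, W ω)) := H_swap μ W Z
    have s4 : H μ (fun ω => ((Z ω, W ω), X ω)) = H μ (fun ω => ((X ω, W ω), Z ω)) := by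
      have h := H_comp_equiv μ (fun ω => ((Z ω, W ω), X ω)) (eqv3 S T U)
      exact h.symm.trans rfl
    linarith
  rw [hchain, h2, h3, hcmi0]
  ring

/-- **Minimal sufficiency of the modality-exclusive representation.**
If `V_X ⊥ T | V`, `I(V; V_X | T) = H(V | T)` and `I(T; V_X) = 0`, then
`I(V; V_X) = H(V | T)`; symmetrically, if `T_X ⊥ V | T`, `I(T; T_X | V) = H(T | V)` and
`I(V; T_X) = 0`, then `I(T; T_X) = H(T | V)`. -/
theorem minimal_sufficiency_modality_exclusive
    {SV ST SVX STX : Type*}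
    [Fintype SV] [Nonempty SV] [MeasurableSpace SV] [MeasurableSingletonClass SV]
    [Fintype ST] [Nonempty ST] [MeasurableSpace ST] [MeasurableSingletonClass ST]
    [Fintype SVX] [Nonempty SVX] [MeasurableSpace SVX] [MeasurableSingletonClass SVX]
    [Fintype STX] [Nonempty STX] [MeasurableSpace STX] [MeasurableSingletonClass STX]
    (μ : Measure Ω) [IsProbabilityMeasure μ]
    (V : Ω → SV) (T : Ω → ST) (VX : Ω → SVX) (TX : Ω → STX)
    (hV : Measurable V) (hT : Measurable T) (hVX : Measurable VX) (hTX : Measurable TX) :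
    ((CondIndep μ VX T V → CMI μ V VX T = condH μ V T → MI μ T VX = 0 →
        MI μ V VX = condH μ V T) ∧
      (CondIndep μ TX V T → CMI μ T TX V = condH μ T V → MI μ V TX = 0 →
        MI μ T TX = condH μ T V)) := by
  constructor
  · intro h1 h2 h3
    exact key_lemma μ hV hT hVX h1 h2 h3
  · intro h1 h2 h3
    exact key_lemma μ hT hV hTX h1 h2 h3

end DisNCL
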